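/- Let Γ = (V, E) be a finite graph and let F ⊆ E be a flat of the graphic matroid of Γ. If S is an nbc set associated to F (i.e., S ⊆ F is nbc and S spans the subgraph Γ[F]), then the set of larger endpoints {h(e) : e ∈ S} equals {h(e) : e ∈ F'} for any other spanning nbc set S' associated to F; in particular {h(e) : e ∈ S} does not depend on the choice of S. (Here Γ is chordal with a perfect elimination ordering.) -/

import Mathlib

open SimpleGraph

section Defs

variable {V : Type*}

/-- The larger endpoint (head) of an edge, with respect to a linear order on vertices. -/
def esup [LinearOrder V] (e : Sym2 V) : V :=
  Sym2.lift ⟨fun a b => a ⊔ b, fun a b => sup_comm a b⟩ e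

/-- The smaller endpoint (tail) of an edge. -/
def einf [LinearOrder V] (e : Sym2 V) : V :=
  Sym2.lift ⟨fun a b => a ⊓ b, fun a b => inf_comm a b⟩ e

/-- The order on edges induced by a linear order on vertices:
`e < e'` iff `h(e) < h(e')`, or `h(e) = h(e')` and `t(e) < t(e')`. -/
def edgeLT [LinearOrder V] (e f : Sym2 V) : Prop :=
  esup e < esup f ∨ (esup e = esup f ∧ einf e < einf f)

/-- The linear order on the vertices is a perfect elimination ordering: every vertex is
simplicial in the induced subgraph on the vertices below it. -/
def IsPEO [LinearOrder V] (G : SimpleGraph V) : Prop :=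
  ∀ v u w : V, u < v → w < v → u ≠ w → G.Adj u v → G.Adj w v → G.Adj u w

/-- A cycle (walk) in a graph has a chord. -/
def SimpleGraph.Walk.HasChord {G : SimpleGraph V} {v : V} (c : G.Walk v v) : Prop :=
  ∃ a b : V, a ∈ c.support ∧ b ∈ c.support ∧ G.Adj a b ∧ s(a, b) ∉ c.edges

/-- A graph is chordal if every cycle with more than three vertices has a chord. -/
def SimpleGraph.IsChordal (G : SimpleGraph V) : Prop :=
  ∀ (v : V) (c : G.Walk v v), c.IsCycle → 3 < c.length → c.HasChord

/-- `S` is the edge set of a cycle of `G`. -/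
def IsCycleEdges [DecidableEq V] (G : SimpleGraph V) (S : Finset (Sym2 V)) : Prop :=
  ∃ (v : V) (c : G.Walk v v), c.IsCycle ∧ c.edges.toFinset = S

/-- `S` is a broken circuit: there is an edge `e` smaller than every element of `S` such that
`S ∪ {e}` is the edge set of a cycle. -/
def IsBrokenCircuit [LinearOrder V] (G : SimpleGraph V) (S : Finset (Sym2 V)) : Prop :=
  ∃ e : Sym2 V, e ∉ S ∧ (∀ f ∈ S, edgeLT e f) ∧ IsCycleEdges G (insert e S)

/-- `S` is an nbc set: a set of edges of `G` no subset of which is a broken circuit. -/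
def IsNBC [LinearOrder V] (G : SimpleGraph V) (S : Finset (Sym2 V)) : Prop :=
  ↑S ⊆ G.edgeSet ∧ ∀ T ⊆ S, ¬IsBrokenCircuit G T

end Defs

/-- `F` is a flat of the graphic matroid of `G`: a set of edges of `G` such that any edge of `G`
whose endpoints are joined by a path using edges of `F` already lies in `F`. -/
def IsGraphicFlat {V : Type*} (G : SimpleGraph V) (F : Set (Sym2 V)) : Prop :=
  F ⊆ G.edgeSet ∧
    ∀ u w : V, G.Adj u w → (SimpleGraph.fromEdgeSet F).Reachable u w → s(u, w) ∈ F

/-- `S` spans the subgraph `Γ[F]`: the endpoints of every edge of `F` are connected using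
only edges of `S`. -/
def SpansFlat {V : Type*} (F S : Set (Sym2 V)) : Prop :=
  ∀ u w : V, s(u, w) ∈ F → (SimpleGraph.fromEdgeSet S).Reachable u w

section Aux

variable {V : Type*} [LinearOrder V]

lemma esup_mk (a b : V) : esup s(a, b) = a ⊔ b := rfl

lemma einf_mk (a b : V) : einf s(a, b) = a ⊓ b := rfl

lemma edge_repr {e : Sym2 V} (he : ¬e.IsDiag) :
    e = s(einf e, esup e) ∧ einf e < esup e := by
  induction e using Sym2.ind with
  | _ a b =>
    rw [Sym2.mk_isDiag_iff] at he
    refine ⟨?_, ?_⟩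
    · rw [einf_mk, esup_mk]
      rcases le_total a b with h | h
      · rw [inf_eq_left.2 h, sup_eq_right.2 h]
      · rw [inf_eq_right.2 h, sup_eq_left.2 h]; exact Sym2.eq_swap
    · rw [einf_mk, esup_mk]; exact inf_lt_sup.2 he

/-- Within an nbc set of a graph with a PEO, all edges have distinct larger endpoints. -/
lemma nbc_esup_injOn {G : SimpleGraph V} (hpeo : IsPEO G)
    {S : Finset (Sym2 V)} (hS : IsNBC G S) :
    ∀ e ∈ S, ∀ f ∈ S, esup e = esup f → e = f := by
  intro e he f hf hef
  by_contra hne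
  have heG : e ∈ G.edgeSet := hS.1 he
  have hfG : f ∈ G.edgeSet := hS.1 hf
  obtain ⟨hee, helt⟩ := edge_repr (G.not_isDiag_of_mem_edgeSet heG)
  obtain ⟨hfe, hflt⟩ := edge_repr (G.not_isDiag_of_mem_edgeSet hfG)
  set v := esup e with hv
  set u := einf e with hu
  set w := einf f with hw
  rw [← hef] at hfe hflt
  have huw : u ≠ w := by
    intro h; apply hne; rw [hee, hfe, h]
  have huv : G.Adj u v := by rw [← SimpleGraph.mem_edgeSet, ← hee]; exact heG
  have hwv : G.Adj w v := by rw [← SimpleGraph.mem_edgeSet, ← hfe]; exact hfG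
  have hadjuw : G.Adj u w := hpeo v u w helt hflt huw huv hwv
  -- build the triangle cycle v - u - w - v
  let c : G.Walk v v :=
    SimpleGraph.Walk.cons huv.symm (SimpleGraph.Walk.cons hadjuw
      (SimpleGraph.Walk.cons hwv SimpleGraph.Walk.nil))
  have hune : u ≠ v := ne_of_lt helt
  have hwne : w ≠ v := ne_of_lt hflt
  have hcycle : c.IsCycle := by
    rw [SimpleGraph.Walk.isCycle_def]
    refine ⟨?_, by simp [c], ?_⟩
    · rw [SimpleGraph.Walk.isTrail_def]
      have hedges : c.edges = [s(v, u), s(u, w), s(w, v)] := rfl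
      rw [hedges]
      refine List.nodup_cons.2 ⟨?_, List.nodup_cons.2 ⟨?_, List.nodup_singleton _⟩⟩
      · simp only [List.mem_cons, List.mem_singleton, List.not_mem_nil, or_false]
        rintro (h | h) <;> rw [Sym2.eq_iff] at h <;>
          rcases h with ⟨h1, h2⟩ | ⟨h1, h2⟩
        · exact hune h1.symm
        · exact hwne h1.symm
        · exact hwne h1.symm
        · exact huw h2
      · simp only [List.mem_singleton, List.mem_cons, List.not_mem_nil, or_false]
        intro h; rw [Sym2.eq_iff] at h
        rcases h with ⟨h1, h2⟩ | ⟨h1, h2⟩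
        · exact huw h1
        · exact hune h1
    · have hsupp : c.support = [v, u, w, v] := rfl
      rw [hsupp]
      simp only [List.tail_cons, List.nodup_cons, List.mem_cons, List.mem_singleton,
        List.not_mem_nil, List.nodup_nil, and_true, not_or, or_false]
      exact ⟨⟨huw, hune⟩, hwne, by simp⟩
  -- `{e, f}` is a broken circuit contained in `S`
  have hsub : ({e, f} : Finset (Sym2 V)) ⊆ S := by
    intro x hx
    rcases Finset.mem_insert.1 hx with h | h
    · rwa [h]
    · rw [Finset.mem_singleton.1 h]; exact hf
  refine hS.2 {e, f} hsub ?_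
  refine ⟨s(u, w), ?_, ?_, v, c, hcycle, ?_⟩
  · intro hmem
    have : esup s(u, w) = v := by
      rcases Finset.mem_insert.1 hmem with h | h
      · rw [h]
      · rw [Finset.mem_singleton.1 h, ← hef]
    rw [esup_mk] at this
    rcases le_total u w with h | h
    · rw [sup_eq_right.2 h] at this; exact (ne_of_lt hflt) this
    · rw [sup_eq_left.2 h] at this; exact (ne_of_lt helt) this
  · intro x hx
    have hx' : esup x = v := by
      rcases Finset.mem_insert.1 hx with h | h
      · rw [h]
      · rw [Finset.mem_singleton.1 h, ← hef]
    left
    rw [hx', esup_mk]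
    exact sup_lt_iff.2 ⟨helt, hflt⟩
  · have hedges : c.edges = [s(v, u), s(u, w), s(w, v)] := rfl
    rw [hedges]
    have h1 : s(v, u) = e := by rw [Sym2.eq_swap, ← hee]
    have h2 : s(w, v) = f := hfe.symm
    simp only [List.toFinset_cons, List.toFinset_nil, insert_empty_eq, h1, h2]
    rw [Finset.insert_comm]

/-- Reachability in the flat transfers to reachability in a spanning set. -/
lemma reach_transfer {F S : Set (Sym2 V)} (hspan : SpansFlat F S) {u v : V}
    (h : (SimpleGraph.fromEdgeSet F).Reachable u v) :
    (SimpleGraph.fromEdgeSet S).Reachable u v := by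
  obtain ⟨W⟩ := h
  induction W with
  | nil => exact SimpleGraph.Reachable.refl _
  | cons h p ih =>
    rw [SimpleGraph.fromEdgeSet_adj] at h
    exact (hspan _ _ h.1).trans ih

lemma edge_of_walk_mem {S : Finset (Sym2 V)} {x y : V}
    {Q : (SimpleGraph.fromEdgeSet (↑S : Set (Sym2 V))).Walk x y} {e : Sym2 V}
    (he : e ∈ Q.edges) : e ∈ S := by
  have := Q.edges_subset_edgeSet he
  rw [SimpleGraph.edgeSet_fromEdgeSet] at this
  exact this.1

/-- If a vertex is reachable from some smaller vertex through edges with distinct larger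
endpoints, it is the larger endpoint of one of them. -/
lemma mem_image_esup {S : Finset (Sym2 V)}
    (hinj : ∀ e ∈ S, ∀ f ∈ S, esup e = esup f → e = f)
    {u v : V} (huv : u < v)
    (h : (SimpleGraph.fromEdgeSet (↑S : Set (Sym2 V))).Reachable u v) :
    v ∈ S.image esup := by
  set H := SimpleGraph.fromEdgeSet (↑S : Set (Sym2 V)) with hH
  obtain ⟨W⟩ := h.symm
  let P : H.Walk v u := W.toPath
  have hP : P.IsPath := W.toPath.2
  have hsupne : P.support.toFinset.Nonempty :=
    ⟨v, by rw [List.mem_toFinset]; exact P.start_mem_support⟩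
  set m := P.support.toFinset.max' hsupne with hm
  have hmmem : m ∈ P.support := by
    rw [← List.mem_toFinset]; exact P.support.toFinset.max'_mem hsupne
  have hmax : ∀ z ∈ P.support, z ≤ m := fun z hz =>
    P.support.toFinset.le_max' z (List.mem_toFinset.2 hz)
  have hvne : v ≠ u := (huv.ne).symm
  rcases eq_or_ne m v with hmv | hmv
  · -- the maximum is `v` itself, so its first edge goes down
    have hPnil : ¬P.Nil := by
      intro hnil
      exact hvne (SimpleGraph.Walk.Nil.eq hnil)
    obtain ⟨x, hadj, q, hPe⟩ := SimpleGraph.Walk.not_nil_iff.1 hPnil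
    have hedge : s(v, x) ∈ P.edges := by rw [hPe]; simp
    have hxS : s(v, x) ∈ S := edge_of_walk_mem hedge
    have hxsupp : x ∈ P.support := by
      rw [hPe]; simp
    have hxlt : x < v := by
      have := hmax x hxsupp
      rw [hmv] at this
      exact lt_of_le_of_ne this hadj.ne'
    refine Finset.mem_image.2 ⟨s(v, x), hxS, ?_⟩
    rw [esup_mk]
    exact sup_eq_left.2 hxlt.le
  · exfalso
    have hmu : m ≠ u := by
      intro hmu
      have := hmax v P.start_mem_support
      rw [hmu] at this
      exact absurd (lt_of_lt_of_le huv this) (lt_irrefl u)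
    -- `m` is an interior local maximum in the path ⇒ two distinct edges of `S` with sup `m`
    set t := P.takeUntil m hmmem with ht
    set d := P.dropUntil m hmmem with hd
    have htnil : ¬t.reverse.Nil := by
      intro hnil
      exact hmv (SimpleGraph.Walk.Nil.eq hnil)
    obtain ⟨a, ha, qa, _⟩ := SimpleGraph.Walk.not_nil_iff.1 htnil
    have hea : s(m, a) ∈ t.edges := by
      have : s(m, a) ∈ t.reverse.edges := by
        rename_i heq; rw [heq]; simp
      rwa [SimpleGraph.Walk.edges_reverse, List.mem_reverse] at this
    have hdnil : ¬d.Nil := by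
      intro hnil
      exact hmu (SimpleGraph.Walk.Nil.eq hnil)
    obtain ⟨b, hb, qb, hdeq⟩ := SimpleGraph.Walk.not_nil_iff.1 hdnil
    have heb : s(m, b) ∈ d.edges := by rw [hdeq]; simp
    -- both endpoints are strictly below m
    have haP : a ∈ P.support :=
      P.support_takeUntil_subset hmmem (t.snd_mem_support_of_mem_edges hea)
    have hbP : b ∈ P.support :=
      P.support_dropUntil_subset hmmem (d.snd_mem_support_of_mem_edges heb)
    have halt : a < m := lt_of_le_of_ne (hmax a haP) ha.ne'
    have hblt : b < m := lt_of_le_of_ne (hmax b hbP) hb.ne'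
    have haS : s(m, a) ∈ S := edge_of_walk_mem hea
    have hbS : s(m, b) ∈ S := edge_of_walk_mem heb
    have hsups : esup s(m, a) = esup s(m, b) := by
      rw [esup_mk, esup_mk, sup_eq_left.2 halt.le, sup_eq_left.2 hblt.le]
    have heq' : s(m, a) = s(m, b) := hinj _ haS _ hbS hsups
    -- but the edges of a path are pairwise distinct and the two lists are disjoint
    have hnd : P.edges.Nodup := hP.edges_nodup
    rw [← SimpleGraph.Walk.take_spec P hmmem, SimpleGraph.Walk.edges_append] at hnd
    have hdisj := (List.nodup_append.1 hnd).2.2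
    exact hdisj _ hea _ (heq' ▸ heb) rfl

end Aux

/-- The larger endpoints of a spanning nbc set are exactly the vertices having a smaller
vertex reachable in the flat. -/
lemma image_esup_char {V : Type*} [LinearOrder V] (G : SimpleGraph V) (hpeo : IsPEO G)
    (F S : Finset (Sym2 V)) (hSF : S ⊆ F) (hS : IsNBC G S)
    (hSspan : SpansFlat (↑F) (↑S : Set (Sym2 V))) (v : V) :
    v ∈ S.image esup ↔
      ∃ u, u < v ∧ (SimpleGraph.fromEdgeSet (↑F : Set (Sym2 V))).Reachable u v := by
  constructor
  · rintro hv
    obtain ⟨e, he, rfl⟩ := Finset.mem_image.1 hv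
    have heG : e ∈ G.edgeSet := hS.1 he
    obtain ⟨hee, helt⟩ := edge_repr (G.not_isDiag_of_mem_edgeSet heG)
    refine ⟨einf e, helt, SimpleGraph.Adj.reachable ?_⟩
    rw [SimpleGraph.fromEdgeSet_adj]
    refine ⟨?_, ne_of_lt helt⟩
    rw [← hee]
    exact hSF he
  · rintro ⟨u, hu, hr⟩
    exact mem_image_esup (nbc_esup_injOn hpeo hS) hu (reach_transfer hSspan hr)

/-- For a chordal graph with a perfect elimination ordering and a flat `F` of the graphic
matroid, the set of larger endpoints of a spanning nbc set associated to `F` does not depend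
on the choice of that set. -/
theorem stmt_3 {V : Type*} [Fintype V] [LinearOrder V] (G : SimpleGraph V)
    (hchordal : G.IsChordal) (hpeo : IsPEO G) (F : Finset (Sym2 V))
    (hF : IsGraphicFlat G ↑F) (S S' : Finset (Sym2 V))
    (hSF : S ⊆ F) (hS : IsNBC G S) (hSspan : SpansFlat (↑F) (↑S : Set (Sym2 V)))
    (hS'F : S' ⊆ F) (hS' : IsNBC G S') (hS'span : SpansFlat (↑F) (↑S' : Set (Sym2 V))) :
    S.image esup = S'.image esup := by
  ext v
  rw [image_esup_char G hpeo F S hSF hS hSspan v,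
    image_esup_char G hpeo F S' hS'F hS' hS'span v]
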